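/- Let R = K[x] and P_n the two-term complex R --x^n--> R in degrees -1, 0. For positive integers l, m, n with max(0, l-m) < i ≤ l and max(0, n-m) ≤ j < n, the composition (x^j_{m,n})[1] ∘ y^i_{l,m} in K^b(proj R) equals y^{i-j}_{l,n} if i - j > max(0, l-n), and equals 0 otherwise. -/

import Mathlib

/- Setup: `R = K[x]`, the two-term cochain complexes `P n = (R --x^n--> R)` in degrees
`-1, 0`, and the morphisms `x^i_{m,n}` and `y^i_{m,n}` in the bounded homotopy category
`K^b(proj R)` (realized inside the homotopy category of cochain complexes of
`R`-modules). -/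

noncomputable section
open CategoryTheory CategoryTheory.Limits Polynomial ZeroObject CategoryTheory.Pretriangulated

variable (K : Type) [Field K]

abbrev RMod := ModuleCat.of (Polynomial K) (Polynomial K)

/-- Multiplication by `x^a` on `R = K[x]`. -/
def mulX (a : ℕ) : RMod K ⟶ RMod K :=
  ModuleCat.ofHom (LinearMap.mulLeft (Polynomial K) ((X : Polynomial K) ^ a))

lemma mulX_comp (a b : ℕ) : mulX K a ≫ mulX K b = mulX K (a + b) := by
  ext p : 2
  simp only [mulX, ModuleCat.hom_comp, ModuleCat.hom_ofHom, LinearMap.comp_apply,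
    LinearMap.mulLeft_apply]
  rw [← mul_assoc, ← pow_add, add_comm]

/-- The graded pieces of the two-term complexes `P n`. -/
def Pobj : ℤ → ModuleCat (Polynomial K) := fun i =>
  if i = -1 ∨ i = 0 then RMod K else ModuleCat.of (Polynomial K) PUnit

lemma PobjNeg : Pobj K (-1) = RMod K := by simp [Pobj]
lemma PobjZero : Pobj K 0 = RMod K := by simp [Pobj]

/-- The differential of `P n`. -/
def Pd (n : ℕ) : ∀ i : ℤ, Pobj K i ⟶ Pobj K (i + 1) := fun i =>
  if h : i = -1 then
    eqToHom (by rw [h, PobjNeg]) ≫ mulX K n ≫ eqToHom (by rw [h]; norm_num [PobjZero])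
  else 0

/-- The two-term complex `P n = (R --x^n--> R)` in degrees `-1, 0`. -/
def P (n : ℕ) : CochainComplex (ModuleCat (Polynomial K)) ℤ :=
  CochainComplex.of (Pobj K) (Pd K n) (fun i => by
    by_cases h : i = -1
    · have h2 : Pd K n (i + 1) = 0 := dif_neg (by omega)
      rw [h2, Limits.comp_zero]
    · have h1 : Pd K n i = 0 := dif_neg h
      rw [h1, Limits.zero_comp])

lemma P_d_eq_zero (n : ℕ) (i j : ℤ) (hi : i ≠ -1) : (P K n).d i j = 0 := by
  by_cases h : i + 1 = j
  · subst h
    dsimp only [P]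
    rw [CochainComplex.of_d]
    exact dif_neg hi
  · exact HomologicalComplex.shape _ _ _ (by simpa using h)

/-- The components of the chain map which is multiplication by `x^a` in degree `-1`
and by `x^b` in degree `0`. -/
def xComp (a b : ℕ) : ∀ i : ℤ, Pobj K i ⟶ Pobj K i := fun i =>
  if h : i = -1 then eqToHom (by rw [h, PobjNeg]) ≫ mulX K a ≫ eqToHom (by rw [h, PobjNeg])
  else if h0 : i = 0 then
    eqToHom (by rw [h0, PobjZero]) ≫ mulX K b ≫ eqToHom (by rw [h0, PobjZero])
  else 0

/-- The chain map `P m ⟶ P n` which is multiplication by `x^a` in degree `-1` and by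
`x^b` in degree `0`; it commutes with the differentials since `a + n = b + m`. -/
def xMap (m n a b : ℕ) (hab : a + n = b + m) : P K m ⟶ P K n :=
  CochainComplex.ofHom (xComp K a b) (by
    intro i
    dsimp only [P]
    rw [CochainComplex.of_d, CochainComplex.of_d]
    by_cases hi : i = -1
    · subst hi
      show xComp K a b (-1) ≫ Pd K n (-1) = Pd K m (-1) ≫ xComp K a b (-1 + 1)
      rw [show xComp K a b (-1 + 1) = xComp K a b 0 from rfl]
      rw [show xComp K a b (-1) = eqToHom (PobjNeg K) ≫ mulX K a ≫ eqToHom (PobjNeg K).symm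
          from dif_pos rfl]
      rw [show xComp K a b 0 = eqToHom (PobjZero K) ≫ mulX K b ≫ eqToHom (PobjZero K).symm
          from by rw [xComp, dif_neg (by norm_num), dif_pos rfl]]
      rw [show Pd K n (-1) = eqToHom (PobjNeg K) ≫ mulX K n ≫
            eqToHom (by norm_num [PobjZero] : RMod K = Pobj K (-1 + 1))
          from dif_pos rfl]
      rw [show Pd K m (-1) = eqToHom (PobjNeg K) ≫ mulX K m ≫
            eqToHom (by norm_num [PobjZero] : RMod K = Pobj K (-1 + 1))
          from dif_pos rfl]
      simp only [Category.assoc, eqToHom_trans_assoc, eqToHom_refl, Category.id_comp]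
      try simp only [Category.comp_id]
      rw [← Category.assoc (mulX K a), mulX_comp, ← Category.assoc (mulX K m), mulX_comp, hab]
      rw [Nat.add_comm b m]
    · have h1 : Pd K m i = 0 := dif_neg hi
      have h2 : Pd K n i = 0 := dif_neg hi
      rw [h1, h2, Limits.comp_zero, Limits.zero_comp])

/-- The components of `y^i_{m,n}`. -/
def yComp (m n a : ℕ) : ∀ i : ℤ, (P K m).X i ⟶ ((P K n)⟦(1 : ℤ)⟧).X i := fun i =>
  if h : i = -1 then
    eqToHom (by rw [h]; exact PobjNeg K) ≫ mulX K a ≫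
      eqToHom (by rw [h]; show RMod K = Pobj K (-1 + 1); norm_num [PobjZero])
  else 0

/-- The chain map `P m ⟶ (P n)⟦1⟧` whose only nonzero component is multiplication by
`x^a` in degree `-1` (landing in the degree `0` part of `P n`). -/
def yMap (m n a : ℕ) : P K m ⟶ (P K n)⟦(1 : ℤ)⟧ where
  f := yComp K m n a
  comm' := fun i j hij => by
    have hj : i + 1 = j := hij
    have hY : ∀ i' j' : ℤ, i' ≠ -2 → ((P K n)⟦(1 : ℤ)⟧).d i' j' = 0 := fun i' j' h => by
      rw [CochainComplex.shiftFunctor_obj_d',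
        P_d_eq_zero K n _ _ (by change i' + 1 ≠ -1; omega), smul_zero]
      rfl
    by_cases hi : i = -1
    · rw [hY i j (by omega), Limits.comp_zero,
        show yComp K m n a j = 0 from dif_neg (by omega), Limits.comp_zero]
    · rw [show yComp K m n a i = 0 from dif_neg hi, Limits.zero_comp]
      by_cases hj' : j = -1
      · rw [P_d_eq_zero K m i j hi, Limits.zero_comp]
      · rw [show yComp K m n a j = 0 from dif_neg hj', Limits.comp_zero]

/-- The homotopy category of cochain complexes of `K[x]`-modules, in which the bounded
homotopy category of finitely generated projectives embeds fully faithfully. -/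
abbrev KbT := HomotopyCategory (ModuleCat (Polynomial K)) (ComplexShape.up ℤ)

abbrev Q : CochainComplex (ModuleCat (Polynomial K)) ℤ ⥤ KbT K :=
  HomotopyCategory.quotient _ _

/-- `P n` as an object of the homotopy category. -/
abbrev Pbar (n : ℕ) : KbT K := (Q K).obj (P K n)

/-- The morphism `x^i_{m,n} : P m ⟶ P n` in the homotopy category, defined for
`max (0, n - m) ≤ i` (expressed with truncated subtraction on `ℕ`); in degree `-1` it is
multiplication by `x^(i+m-n)` and in degree `0` multiplication by `x^i`. -/
def xbar (m n i : ℕ) (h : n - m ≤ i) : Pbar K m ⟶ Pbar K n :=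
  (Q K).map (xMap K m n (i + m - n) i (by omega))

/-- The identification `Q(P n ⟦1⟧) ≅ (Q (P n))⟦1⟧` in the homotopy category. -/
def shIso (n : ℕ) : (Q K).obj ((P K n)⟦(1 : ℤ)⟧) ≅ (Pbar K n)⟦(1 : ℤ)⟧ :=
  ((Q K).commShiftIso (1 : ℤ)).app (P K n)

/-- The morphism `y^i_{m,n} : P m ⟶ (P n)[1]` in the homotopy category, defined for
`i ≤ m`; its only nonzero component is multiplication by `x^(m-i)` in degree `-1`. -/
def ybar (m n i : ℕ) (_h : i ≤ m) : Pbar K m ⟶ (Pbar K n)⟦(1 : ℤ)⟧ :=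
  (Q K).map (yMap K m n (m - i)) ≫ (shIso K n).hom

lemma mulX_comp_assoc (a b : ℕ) {Z : ModuleCat (Polynomial K)} (f : RMod K ⟶ Z) :
    mulX K a ≫ mulX K b ≫ f = mulX K (a + b) ≫ f := by
  rw [← Category.assoc, mulX_comp]

lemma yMap_comp_shift_xMap (l m n c a b : ℕ) (hab : a + n = b + m) :
    yMap K l m c ≫
      (shiftFunctor (CochainComplex (ModuleCat (Polynomial K)) ℤ) (1 : ℤ)).map
        (xMap K m n a b hab) = yMap K l n (c + b) := by
  apply HomologicalComplex.hom_ext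
  intro i
  rw [HomologicalComplex.comp_f]
  by_cases hi : i = -1
  · subst hi
    show yComp K l m c (-1) ≫ xComp K a b (-1 + 1) = yComp K l n (c + b) (-1)
    rw [show yComp K l m c (-1) = eqToHom (PobjNeg K) ≫ mulX K c ≫
          eqToHom (show RMod K = Pobj K (-1 + 1) by norm_num [PobjZero])
        from dif_pos rfl]
    rw [show yComp K l n (c + b) (-1) = eqToHom (PobjNeg K) ≫ mulX K (c + b) ≫
          eqToHom (show RMod K = Pobj K (-1 + 1) by norm_num [PobjZero])
        from dif_pos rfl]
    rw [show xComp K a b (-1 + 1) = eqToHom (PobjZero K) ≫ mulX K b ≫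
          eqToHom (PobjZero K).symm
        from by rw [xComp, dif_neg (by norm_num)]; exact dif_pos (by norm_num)]
    change mulX K c ≫ mulX K b = mulX K (c + b)
    rw [mulX_comp]
  · show yComp K l m c i ≫ xComp K a b (i + 1) = yComp K l n (c + b) i
    rw [show yComp K l m c i = 0 from dif_neg hi,
      show yComp K l n (c + b) i = 0 from dif_neg hi]
    exact Limits.zero_comp

/-- Null-homotopy of `yMap K l n a` when `l ≤ a`. -/
def htpyL (l n a : ℕ) (h : l ≤ a) : Homotopy (yMap K l n a) 0 where
  hom := fun i j =>
    if hij : i = 0 ∧ j = -1 then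
      eqToHom (by rw [hij.1]; exact PobjZero K) ≫ mulX K (a - l) ≫
        eqToHom (by rw [hij.2]; show RMod K = Pobj K (-1 + 1); norm_num [PobjZero])
    else 0
  zero := fun i j hij => dif_neg (fun hc => hij (by rw [hc.1, hc.2]; simp))
  comm := fun i => by
    rw [HomologicalComplex.zero_f _ _ _, add_zero]
    by_cases hi : i = -1
    · subst hi
      rw [dNext_eq _ (show (ComplexShape.up ℤ).Rel (-1) 0 by simp),
        prevD_eq _ (show (ComplexShape.up ℤ).Rel (-2) (-1) by simp)]
      rw [show (if hij : (-1 : ℤ) = 0 ∧ (-2 : ℤ) = -1 then _ else (0 : (P K l).X (-1) ⟶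
            ((P K n)⟦(1 : ℤ)⟧).X (-2))) = 0 from dif_neg (by norm_num), Limits.zero_comp, add_zero]
      erw [show (if hij : (0 : ℤ) = 0 ∧ (-1 : ℤ) = -1 then
            eqToHom (PobjZero K) ≫ mulX K (a - l) ≫
              eqToHom (show RMod K = Pobj K (-1 + 1) by norm_num [PobjZero])
          else (0 : (P K l).X 0 ⟶ ((P K n)⟦(1 : ℤ)⟧).X (-1))) =
          eqToHom (PobjZero K) ≫ mulX K (a - l) ≫
            eqToHom (show RMod K = Pobj K (-1 + 1) by norm_num [PobjZero])
        from dif_pos ⟨rfl, rfl⟩]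
      rw [show (P K l).d (-1) 0 = eqToHom (PobjNeg K) ≫ mulX K l ≫
            eqToHom (show RMod K = Pobj K (-1 + 1) by norm_num [PobjZero])
          from (CochainComplex.of_d (Pobj K) (Pd K l) (-1)).trans (dif_pos rfl)]
      rw [show (yMap K l n a).f (-1) = yComp K l n a (-1) from rfl,
        show yComp K l n a (-1) = eqToHom (PobjNeg K) ≫ mulX K a ≫
            eqToHom (show RMod K = Pobj K (-1 + 1) by norm_num [PobjZero])
          from dif_pos rfl]
      change mulX K a = mulX K l ≫ mulX K (a - l)
      rw [mulX_comp, Nat.add_sub_cancel' h]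
    · by_cases hi0 : i = 0
      · subst hi0
        rw [show (yMap K l n a).f 0 = yComp K l n a 0 from rfl,
          show yComp K l n a 0 = 0 from dif_neg (by norm_num)]
        rw [dNext_eq _ (show (ComplexShape.up ℤ).Rel 0 1 by simp),
          prevD_eq _ (show (ComplexShape.up ℤ).Rel (-1) 0 by simp)]
        rw [P_d_eq_zero K l 0 1 (by norm_num), Limits.zero_comp, zero_add]
        rw [show ((P K n)⟦(1 : ℤ)⟧).d (-1) 0 = (1 : ℤ).negOnePow • (P K n).d (-1 + 1) (0 + 1)
            from rfl, P_d_eq_zero K n (-1 + 1) (0 + 1) (by norm_num), smul_zero,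
          ]
        erw [Limits.comp_zero]
      · rw [show (yMap K l n a).f i = yComp K l n a i from rfl,
          show yComp K l n a i = 0 from dif_neg hi]
        rw [dNext_eq _ (show (ComplexShape.up ℤ).Rel i (i + 1) by simp),
          prevD_eq _ (show (ComplexShape.up ℤ).Rel (i - 1) i by simp)]
        rw [show (if hij : i + 1 = 0 ∧ i = -1 then _ else (0 : (P K l).X (i + 1) ⟶
              ((P K n)⟦(1 : ℤ)⟧).X i)) = 0 from dif_neg (fun hc => hi hc.2),
          show (if hij : i = 0 ∧ i - 1 = -1 then _ else (0 : (P K l).X i ⟶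
              ((P K n)⟦(1 : ℤ)⟧).X (i - 1))) = 0 from dif_neg (fun hc => hi0 hc.1),
          Limits.comp_zero, Limits.zero_comp, add_zero]

/-- Null-homotopy of `yMap K l n a` when `n ≤ a`. -/
def htpyN (l n a : ℕ) (h : n ≤ a) : Homotopy (yMap K l n a) 0 where
  hom := fun i j =>
    if hij : i = -1 ∧ j = -2 then
      -(eqToHom (by rw [hij.1]; exact PobjNeg K) ≫ mulX K (a - n) ≫
        eqToHom (by rw [hij.2]; show RMod K = Pobj K (-2 + 1); norm_num [PobjNeg]))
    else 0
  zero := fun i j hij => dif_neg (fun hc => hij (by rw [hc.1, hc.2]; simp))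
  comm := fun i => by
    rw [HomologicalComplex.zero_f _ _ _, add_zero]
    by_cases hi : i = -1
    · subst hi
      rw [dNext_eq _ (show (ComplexShape.up ℤ).Rel (-1) 0 by simp),
        prevD_eq _ (show (ComplexShape.up ℤ).Rel (-2) (-1) by simp)]
      rw [show (if hij : (0 : ℤ) = -1 ∧ (-1 : ℤ) = -2 then _ else (0 : (P K l).X 0 ⟶
            ((P K n)⟦(1 : ℤ)⟧).X (-1))) = 0 from dif_neg (by norm_num), Limits.comp_zero,
        zero_add]
      erw [show (if hij : (-1 : ℤ) = -1 ∧ (-2 : ℤ) = -2 then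
            -(eqToHom (PobjNeg K) ≫ mulX K (a - n) ≫
              eqToHom (show RMod K = Pobj K (-2 + 1) by norm_num [PobjNeg]))
          else (0 : (P K l).X (-1) ⟶ ((P K n)⟦(1 : ℤ)⟧).X (-2))) =
          -(eqToHom (PobjNeg K) ≫ mulX K (a - n) ≫
            eqToHom (show RMod K = Pobj K (-2 + 1) by norm_num [PobjNeg]))
        from dif_pos ⟨rfl, rfl⟩]
      rw [show ((P K n)⟦(1 : ℤ)⟧).d (-2) (-1) = (1 : ℤ).negOnePow • (P K n).d (-2 + 1) (-1 + 1)
          from rfl]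
      rw [show (P K n).d (-2 + 1) (-1 + 1) = eqToHom (show Pobj K (-2 + 1) = RMod K
            by norm_num [PobjNeg]) ≫ mulX K n ≫
            eqToHom (show RMod K = Pobj K (-1 + 1) by norm_num [PobjZero])
          from (CochainComplex.of_d (Pobj K) (Pd K n) (-2 + 1)).trans (dif_pos rfl)]
      rw [show (yMap K l n a).f (-1) = yComp K l n a (-1) from rfl,
        show yComp K l n a (-1) = eqToHom (PobjNeg K) ≫ mulX K a ≫
            eqToHom (show RMod K = Pobj K (-1 + 1) by norm_num [PobjZero])
          from dif_pos rfl]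
      rw [Int.negOnePow_one]
      erw [Linear.comp_units_smul, Preadditive.neg_comp, Units.neg_smul, one_smul,
        neg_neg]
      change mulX K a = mulX K (a - n) ≫ mulX K n
      rw [mulX_comp, Nat.sub_add_cancel h]
    · by_cases hi2 : i = -2
      · subst hi2
        rw [show (yMap K l n a).f (-2) = yComp K l n a (-2) from rfl,
          show yComp K l n a (-2) = 0 from dif_neg (by norm_num)]
        rw [dNext_eq _ (show (ComplexShape.up ℤ).Rel (-2) (-1) by simp),
          prevD_eq _ (show (ComplexShape.up ℤ).Rel (-3) (-2) by simp)]
        rw [P_d_eq_zero K l (-2) (-1) (by norm_num), Limits.zero_comp, zero_add]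
        rw [show (if hij : (-2 : ℤ) = -1 ∧ (-3 : ℤ) = -2 then _ else (0 : (P K l).X (-2) ⟶
              ((P K n)⟦(1 : ℤ)⟧).X (-3))) = 0 from dif_neg (by norm_num), Limits.zero_comp]
      · rw [show (yMap K l n a).f i = yComp K l n a i from rfl,
          show yComp K l n a i = 0 from dif_neg hi]
        rw [dNext_eq _ (show (ComplexShape.up ℤ).Rel i (i + 1) by simp),
          prevD_eq _ (show (ComplexShape.up ℤ).Rel (i - 1) i by simp)]
        rw [show (if hij : i + 1 = -1 ∧ i = -2 then _ else (0 : (P K l).X (i + 1) ⟶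
              ((P K n)⟦(1 : ℤ)⟧).X i)) = 0 from dif_neg (fun hc => hi2 hc.2),
          show (if hij : i = -1 ∧ i - 1 = -2 then _ else (0 : (P K l).X i ⟶
              ((P K n)⟦(1 : ℤ)⟧).X (i - 1))) = 0 from dif_neg (fun hc => hi hc.1),
          Limits.comp_zero, Limits.zero_comp, add_zero]

lemma Qmap_yMap_eq_zero (l n a : ℕ) (h : l ≤ a ∨ n ≤ a) :
    (Q K).map (yMap K l n a) = 0 := by
  rw [show (0 : (Q K).obj (P K l) ⟶ (Q K).obj ((P K n)⟦(1 : ℤ)⟧)) =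
      (Q K).map 0 from (Functor.map_zero _ _ _).symm]
  rcases h with h | h
  · exact HomotopyCategory.eq_of_homotopy _ _ (htpyL K l n a h)
  · exact HomotopyCategory.eq_of_homotopy _ _ (htpyN K l n a h)

/-- for positive `l, m, n` with `max (0, l-m) < i ≤ l` and
`max (0, n-m) ≤ j < n`, the composition `(x^j_{m,n})[1] ∘ y^i_{l,m}` equals
`y^(i-j)_{l,n}` if `i - j > max (0, l-n)`, and `0` otherwise. -/
theorem shift_xbar_comp_ybar (l m n : ℕ) (hl : 0 < l) (hm : 0 < m) (hn : 0 < n)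
    (i j : ℕ) (hil : l - m < i) (hi : i ≤ l) (hj : n - m ≤ j) (hjn : j < n) :
    ybar K l m i hi ≫ (shiftFunctor (KbT K) (1 : ℤ)).map (xbar K m n j hj) =
      if j < i ∧ l - n < i - j then ybar K l n (i - j) (by omega) else 0 := by
  have nat := ((Q K).commShiftIso (1 : ℤ)).hom.naturality (xMap K m n (j + m - n) j (by omega))
  dsimp only [Functor.comp_map] at nat
  have key : ybar K l m i hi ≫ (shiftFunctor (KbT K) (1 : ℤ)).map (xbar K m n j hj) =
      (Q K).map (yMap K l n ((l - i) + j)) ≫ (shIso K n).hom := by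
    show ((Q K).map (yMap K l m (l - i)) ≫ (shIso K m).hom) ≫
        (shiftFunctor (KbT K) (1 : ℤ)).map ((Q K).map (xMap K m n (j + m - n) j (by omega))) = _
    rw [Category.assoc, show (shIso K m).hom = ((Q K).commShiftIso (1 : ℤ)).hom.app (P K m)
        from rfl, ← nat, ← Category.assoc, ← Functor.map_comp,
      yMap_comp_shift_xMap K l m n (l - i) (j + m - n) j (by omega)]
    rfl
  by_cases hc : j < i ∧ l - n < i - j
  · rw [if_pos hc, key, show (l - i) + j = l - (i - j) by omega]
    rfl
  · rw [if_neg hc, key, Qmap_yMap_eq_zero K l n ((l - i) + j) (by omega), Limits.zero_comp]
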